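/- Let ρ, θ > 0 and let μ be the probability measure on ℕ obtained by drawing T from Exp(1) and then drawing G from the Poisson distribution with mean (θ/ρ)·(2 − e^{−ρT}). Then the mean of μ equals θ·(1/ρ + 1/(1+ρ)) = θ(1+2ρ)/(ρ(1+ρ)), and the variance of μ equals θ(1+2ρ)/(ρ(1+ρ)) + θ²/((1+ρ)²(1+2ρ)). (Theorem 4 for a sample of size n = 2: conditionally on the coalescence time T ~ Exp(1) of the two individuals, the size G = |𝒢₁ ∪ 𝒢₂| of the dispensable genome is Poisson with parameter (θ/ρ)e^{−ρT} + 2(θ/ρ)(1−e^{−ρT}) = (θ/ρ)(2−e^{−ρT}), and its mean and variance are 𝔼_{n=2}[G] = θ Σ_{i=0}^{1} 1/(ρ+i) and 𝕍_{n=2}[G].) -/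

import Mathlib

open MeasureTheory ProbabilityTheory
open scoped ENNReal NNReal

open Real Set

lemma hasSum_exp_div (r : ℝ) : HasSum (fun n : ℕ => r ^ n / n.factorial) (Real.exp r) := by
  rw [Real.exp_eq_exp_ℝ]
  exact NormedSpace.expSeries_div_hasSum_exp r

lemma hasSum_mul_exp (r : ℝ) :
    HasSum (fun n : ℕ => (n : ℝ) * (r ^ n / n.factorial)) (r * Real.exp r) := by
  have base := (hasSum_exp_div r).mul_left r
  have h : (fun n : ℕ => (n + 1 : ℝ) * (r ^ (n + 1) / (n + 1).factorial)) =
      fun n : ℕ => r * (r ^ n / n.factorial) := by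
    funext n
    have hf : ((n + 1).factorial : ℝ) = (n + 1) * n.factorial := by
      rw [Nat.factorial_succ]; push_cast; ring
    have h0 : ((n : ℝ) + 1) ≠ 0 := by positivity
    have h1 : (n.factorial : ℝ) ≠ 0 := by positivity
    rw [hf, pow_succ]
    field_simp
  have := (hasSum_nat_add_iff (f := fun n : ℕ => (n : ℝ) * (r ^ n / n.factorial)) 1).mp
    (by simpa [h] using base)
  simpa using this

lemma hasSum_mul_sub_exp (r : ℝ) :
    HasSum (fun n : ℕ => (n : ℝ) * ((n : ℝ) - 1) * (r ^ n / n.factorial))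
      (r ^ 2 * Real.exp r) := by
  have base := (hasSum_exp_div r).mul_left (r ^ 2)
  have h : (fun n : ℕ => ((n : ℝ) + 2) * ((n : ℝ) + 2 - 1) *
      (r ^ (n + 2) / (n + 2).factorial)) = fun n : ℕ => r ^ 2 * (r ^ n / n.factorial) := by
    funext n
    have hf : ((n + 2).factorial : ℝ) = (n + 2) * ((n + 1) * n.factorial) := by
      rw [Nat.factorial_succ, Nat.factorial_succ]; push_cast; ring
    have h0 : ((n : ℝ) + 2) ≠ 0 := by positivity
    have h0' : ((n : ℝ) + 1) ≠ 0 := by positivity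
    have h1 : (n.factorial : ℝ) ≠ 0 := by positivity
    push_cast
    rw [hf, pow_succ, pow_succ]
    field_simp
    ring
  have := (hasSum_nat_add_iff
    (f := fun n : ℕ => (n : ℝ) * ((n : ℝ) - 1) * (r ^ n / n.factorial)) 2).mp
    (by simpa [h] using base)
  simpa [Finset.sum_range_succ] using this

lemma poisson_hasSum_mean (r : ℝ≥0) :
    HasSum (fun n : ℕ => (n : ℝ) * poissonPMFReal r n) (r : ℝ) := by
  have h := (hasSum_mul_exp (r : ℝ)).mul_left (Real.exp (-(r : ℝ)))
  have he : Real.exp (-(r : ℝ)) * ((r : ℝ) * Real.exp (r : ℝ)) = (r : ℝ) := by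
    rw [Real.exp_neg]
    field_simp
  rw [he] at h
  refine h.congr_fun fun n => ?_
  simp only [poissonPMFReal]
  ring

lemma poisson_hasSum_sq (r : ℝ≥0) :
    HasSum (fun n : ℕ => (n : ℝ) ^ 2 * poissonPMFReal r n) ((r : ℝ) ^ 2 + r) := by
  have h := ((hasSum_mul_sub_exp (r : ℝ)).add (hasSum_mul_exp (r : ℝ))).mul_left
    (Real.exp (-(r : ℝ)))
  have he : Real.exp (-(r : ℝ)) * ((r : ℝ) ^ 2 * Real.exp (r : ℝ) + (r : ℝ) * Real.exp (r : ℝ))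
      = (r : ℝ) ^ 2 + r := by
    rw [Real.exp_neg]
    field_simp
  rw [he] at h
  refine h.congr_fun fun n => ?_
  simp only [poissonPMFReal]
  ring

lemma lintegral_poisson (r : ℝ≥0) (F : ℕ → ℝ≥0∞) :
    ∫⁻ n, F n ∂poissonMeasure r = ∑' n, F n * ENNReal.ofReal (poissonPMFReal r n) := by
  rw [poissonMeasure, lintegral_countable']
  congr 1
  funext n
  rw [Measure.sum_smul_dirac_singleton]
  rfl

lemma lintegral_poisson_id (r : ℝ≥0) :
    ∫⁻ n, (n : ℝ≥0∞) ∂poissonMeasure r = ENNReal.ofReal (r : ℝ) := by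
  rw [lintegral_poisson]
  rw [← (poisson_hasSum_mean r).tsum_eq,
    ENNReal.ofReal_tsum_of_nonneg
      (fun n => mul_nonneg (Nat.cast_nonneg n) poissonPMFReal_nonneg)
      (poisson_hasSum_mean r).summable]
  congr 1
  funext n
  rw [ENNReal.ofReal_mul (by positivity), ENNReal.ofReal_natCast]

lemma lintegral_poisson_sq (r : ℝ≥0) :
    ∫⁻ n, (n : ℝ≥0∞) ^ 2 ∂poissonMeasure r = ENNReal.ofReal ((r : ℝ) ^ 2 + r) := by
  rw [lintegral_poisson]
  rw [← (poisson_hasSum_sq r).tsum_eq,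
    ENNReal.ofReal_tsum_of_nonneg
      (fun n => mul_nonneg (by positivity) poissonPMFReal_nonneg)
      (poisson_hasSum_sq r).summable]
  congr 1
  funext n
  rw [ENNReal.ofReal_mul (by positivity), ENNReal.ofReal_pow (by positivity),
    ENNReal.ofReal_natCast]

lemma measurable_poissonMeasure : Measurable fun r : ℝ≥0 => poissonMeasure r := by
  apply Measure.measurable_of_measurable_coe
  intro s hs
  simp only [poissonMeasure, Measure.sum_apply _ hs]
  apply Measurable.ennreal_tsum
  intro n
  classical
  simp only [Measure.smul_apply, Measure.dirac_apply' _ hs, smul_eq_mul]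
  have : Measurable fun r : ℝ≥0 => poissonPMFReal r n := by
    simp only [poissonPMFReal]
    fun_prop
  exact (ENNReal.measurable_ofReal.comp this).mul_const _

lemma lintegral_mixture (θ ρ : ℝ) (hρ : 0 < ρ) (F : ℕ → ℝ≥0∞) :
    ∫⁻ n, F n ∂((expMeasure 1).bind (fun t =>
        poissonMeasure ((θ / ρ * (2 - Real.exp (-ρ * t))).toNNReal))) =
      ∫⁻ t, ∫⁻ n, F n
        ∂poissonMeasure ((θ / ρ * (2 - Real.exp (-ρ * t))).toNNReal) ∂expMeasure 1 := by
  refine Measure.lintegral_bind ?_ (measurable_of_countable F).aemeasurable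
  exact (measurable_poissonMeasure.comp
    (f := fun t : ℝ => (θ / ρ * (2 - Real.exp (-ρ * t))).toNNReal)
    (Measurable.real_toNNReal (by fun_prop))).aemeasurable

lemma integral_exp_neg_mul_Ioi' {b : ℝ} (hb : 0 < b) :
    ∫ x in Ioi (0:ℝ), Real.exp (-(b * x)) = 1 / b := by
  have h := integral_comp_mul_left_Ioi (fun x => Real.exp (-x)) 0 hb
  simp only [mul_zero, integral_exp_neg_Ioi_zero, smul_eq_mul, mul_one] at h
  rw [h]
  rw [one_div]

lemma integrableOn_exp_neg_mul {b : ℝ} (hb : 0 < b) :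
    IntegrableOn (fun x : ℝ => Real.exp (-(b * x))) (Ioi 0) := by
  simpa [neg_mul] using exp_neg_integrableOn_Ioi 0 hb

lemma integrable_comb {a b c A B C : ℝ} (hA : 0 < A) (hB : 0 < B) (hC : 0 < C) :
    IntegrableOn (fun t : ℝ => a * Real.exp (-(A * t)) + b * Real.exp (-(B * t))
      + c * Real.exp (-(C * t))) (Ioi 0) :=
  (((integrableOn_exp_neg_mul hA).const_mul a).add
    ((integrableOn_exp_neg_mul hB).const_mul b)).add
    ((integrableOn_exp_neg_mul hC).const_mul c)

lemma integral_comb {a b c A B C : ℝ} (hA : 0 < A) (hB : 0 < B) (hC : 0 < C) :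
    ∫ t in Ioi (0:ℝ), (a * Real.exp (-(A * t)) + b * Real.exp (-(B * t))
      + c * Real.exp (-(C * t))) = a / A + b / B + c / C := by
  have h12 : IntegrableOn (fun t : ℝ => a * Real.exp (-(A * t)) + b * Real.exp (-(B * t)))
      (Ioi 0) := by
    exact ((integrableOn_exp_neg_mul hA).const_mul a).add
      ((integrableOn_exp_neg_mul hB).const_mul b)
  rw [integral_add h12 ((integrableOn_exp_neg_mul hC).const_mul c),
    integral_add ((integrableOn_exp_neg_mul hA).const_mul a)
      ((integrableOn_exp_neg_mul hB).const_mul b),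
    integral_const_mul, integral_const_mul, integral_const_mul,
    integral_exp_neg_mul_Ioi' hA, integral_exp_neg_mul_Ioi' hB, integral_exp_neg_mul_Ioi' hC]
  ring

lemma expMeasure_lintegral (h : ℝ → ℝ) (hm : Measurable h)
    (hnn : ∀ t ∈ Ioi (0:ℝ), 0 ≤ h t)
    (hint : IntegrableOn (fun t => Real.exp (-t) * h t) (Ioi 0)) :
    ∫⁻ t, ENNReal.ofReal (h t) ∂expMeasure 1 =
      ENNReal.ofReal (∫ t in Ioi 0, Real.exp (-t) * h t) := by
  have hpdf : Measurable (gammaPDF 1 1) := by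
    exact ENNReal.measurable_ofReal.comp (measurable_gammaPDFReal 1 1)
  have hg : Measurable fun t : ℝ => ENNReal.ofReal (h t) := by
    exact ENNReal.measurable_ofReal.comp hm
  rw [expMeasure, gammaMeasure, lintegral_withDensity_eq_lintegral_mul _ hpdf hg]
  have h0 : ∀ᵐ t : ℝ, t ≠ 0 := by
    rw [ae_iff]
    simp only [not_not, Set.setOf_eq_eq_singleton]
    exact Real.volume_singleton
  have hae : (fun t => (gammaPDF 1 1 * fun t => ENNReal.ofReal (h t)) t)
      =ᵐ[volume] (Ioi 0).indicator (fun t => ENNReal.ofReal (Real.exp (-t) * h t)) := by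
    filter_upwards [h0] with t ht
    have hg : gammaPDF 1 1 t = exponentialPDF 1 t := rfl
    rcases lt_or_ge 0 t with htp | htn
    · simp only [Pi.mul_apply, hg, exponentialPDF_of_nonneg htp.le,
        Set.indicator_of_mem (mem_Ioi.mpr htp)]
      rw [← ENNReal.ofReal_mul (by positivity)]
      norm_num
    · have htn' : t < 0 := lt_of_le_of_ne htn ht
      simp only [Pi.mul_apply, hg, exponentialPDF_of_neg htn',
        Set.indicator_of_notMem (by simp [not_lt.mpr htn'.le] : t ∉ Ioi (0:ℝ))]
      simp
  rw [lintegral_congr_ae hae, lintegral_indicator measurableSet_Ioi _,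
    ← ofReal_integral_eq_lintegral_ofReal hint]
  exact (ae_restrict_iff' measurableSet_Ioi).mpr (Filter.Eventually.of_forall fun t ht =>
    mul_nonneg (Real.exp_nonneg _) (hnn t ht))

/-- Theorem 4 for a sample of size `n = 2`: conditionally on the coalescence time
`T ~ Exp(1)` of the two individuals, the size `G = |𝒢₁ ∪ 𝒢₂|` of the dispensable
genome is Poisson with parameter `(θ/ρ)(2 - e^{-ρT})`; its mean is
`θ(1/ρ + 1/(1+ρ)) = θ(1+2ρ)/(ρ(1+ρ))` and its variance is
`θ(1+2ρ)/(ρ(1+ρ)) + θ²/((1+ρ)²(1+2ρ))`. -/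
theorem dispensable_genome_two_individuals (θ ρ : ℝ) (hθ : 0 < θ) (hρ : 0 < ρ)
    (μ : Measure ℕ)
    (hμ : μ = (expMeasure 1).bind (fun t =>
      poissonMeasure ((θ / ρ * (2 - Real.exp (-ρ * t))).toNNReal))) :
    (∫ n : ℕ, (n : ℝ) ∂μ) = θ * (1 / ρ + 1 / (1 + ρ)) ∧
    (∫ n : ℕ, (n : ℝ) ∂μ) = θ * (1 + 2 * ρ) / (ρ * (1 + ρ)) ∧
    (∫ n : ℕ, (n : ℝ) ^ 2 ∂μ) - (∫ n : ℕ, (n : ℝ) ∂μ) ^ 2 =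
      θ * (1 + 2 * ρ) / (ρ * (1 + ρ)) + θ ^ 2 / ((1 + ρ) ^ 2 * (1 + 2 * ρ)) := by
  have hρ1 : (0:ℝ) < 1 + ρ := by linarith
  have hρ2 : (0:ℝ) < 1 + 2 * ρ := by linarith
  set q : ℝ := θ / ρ with hq
  have hq0 : 0 < q := div_pos hθ hρ
  set g : ℝ → ℝ := fun t => θ / ρ * (2 - Real.exp (-ρ * t)) with hgdef
  set h : ℝ → ℝ := fun t => max (g t) 0 with hhdef
  have hgmeas : Measurable g := by fun_prop
  have hhmeas : Measurable h := hgmeas.max measurable_const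
  have hcoe : ∀ t, ((θ / ρ * (2 - Real.exp (-ρ * t))).toNNReal : ℝ) = h t := fun t =>
    Real.coe_toNNReal' _
  have hgpos : ∀ t ∈ Ioi (0:ℝ), g t = h t := by
    intro t ht
    have : Real.exp (-ρ * t) ≤ 1 := by
      apply Real.exp_le_one_iff.mpr
      nlinarith [mem_Ioi.mp ht]
    have hg0 : 0 ≤ g t := by
      apply mul_nonneg hq0.le
      linarith
    simp [hhdef, max_eq_left hg0]
  -- pointwise expansions on Ioi 0
  have hexp1 : ∀ t : ℝ, Real.exp (-((1+ρ)*t)) = Real.exp (-t) * Real.exp (-ρ*t) := by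
    intro t
    rw [← Real.exp_add]
    congr 1
    ring
  have hexp2 : ∀ t : ℝ, Real.exp (-((1+2*ρ)*t))
      = Real.exp (-t) * (Real.exp (-ρ*t) * Real.exp (-ρ*t)) := by
    intro t
    rw [← Real.exp_add, ← Real.exp_add]
    congr 1
    ring
  have heq1 : EqOn (fun t : ℝ => 2*q * Real.exp (-(1*t)) + (-q) * Real.exp (-((1+ρ)*t))
      + 0 * Real.exp (-(1*t))) (fun t => Real.exp (-t) * h t) (Ioi 0) := by
    intro t ht
    simp only [← hgpos t ht, hgdef, ← hq, one_mul, hexp1 t]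
    ring
  have heq2 : EqOn (fun t : ℝ => (4*q^2+2*q) * Real.exp (-(1*t))
      + (-(4*q^2+q)) * Real.exp (-((1+ρ)*t)) + q^2 * Real.exp (-((1+2*ρ)*t)))
      (fun t => Real.exp (-t) * (h t ^ 2 + h t)) (Ioi 0) := by
    intro t ht
    simp only [← hgpos t ht, hgdef, ← hq, one_mul, hexp1 t, hexp2 t]
    ring
  have hint1 : IntegrableOn (fun t => Real.exp (-t) * h t) (Ioi 0) :=
    (integrable_comb one_pos hρ1 one_pos).congr_fun heq1 measurableSet_Ioi
  have hint2 : IntegrableOn (fun t => Real.exp (-t) * (h t ^ 2 + h t)) (Ioi 0) :=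
    (integrable_comb one_pos hρ1 hρ2).congr_fun heq2 measurableSet_Ioi
  have hI1 : ∫ t in Ioi (0:ℝ), Real.exp (-t) * h t = 2*q/1 + (-q)/(1+ρ) + 0/1 := by
    rw [← setIntegral_congr_fun measurableSet_Ioi heq1]
    exact integral_comb one_pos hρ1 one_pos
  have hI2 : ∫ t in Ioi (0:ℝ), Real.exp (-t) * (h t ^ 2 + h t)
      = (4*q^2+2*q)/1 + (-(4*q^2+q))/(1+ρ) + q^2/(1+2*ρ) := by
    rw [← setIntegral_congr_fun measurableSet_Ioi heq2]
    exact integral_comb one_pos hρ1 hρ2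
  -- lintegrals over μ
  have hL1 : ∫⁻ n, (n : ℝ≥0∞) ∂μ
      = ENNReal.ofReal (∫ t in Ioi (0:ℝ), Real.exp (-t) * h t) := by
    rw [hμ, lintegral_mixture θ ρ hρ]
    have : ∀ t : ℝ, ∫⁻ n, (n : ℝ≥0∞)
        ∂poissonMeasure ((θ / ρ * (2 - Real.exp (-ρ * t))).toNNReal)
        = ENNReal.ofReal (h t) := by
      intro t
      rw [lintegral_poisson_id, hcoe t]
    rw [lintegral_congr this]
    exact expMeasure_lintegral h hhmeas (fun t _ => le_max_right _ _) hint1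
  have hL2 : ∫⁻ n, (n : ℝ≥0∞) ^ 2 ∂μ
      = ENNReal.ofReal (∫ t in Ioi (0:ℝ), Real.exp (-t) * (h t ^ 2 + h t)) := by
    rw [hμ, lintegral_mixture θ ρ hρ]
    have : ∀ t : ℝ, ∫⁻ n, (n : ℝ≥0∞) ^ 2
        ∂poissonMeasure ((θ / ρ * (2 - Real.exp (-ρ * t))).toNNReal)
        = ENNReal.ofReal (h t ^ 2 + h t) := by
      intro t
      rw [lintegral_poisson_sq, hcoe t]
    rw [lintegral_congr this]
    refine expMeasure_lintegral _ (by fun_prop) (fun t _ => ?_) hint2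
    have := le_max_right (g t) 0
    positivity
  -- convert Bochner integrals
  have hm1 : (∫ n : ℕ, (n : ℝ) ∂μ) = 2*q/1 + (-q)/(1+ρ) + 0/1 := by
    rw [integral_eq_lintegral_of_nonneg_ae (Filter.Eventually.of_forall fun n => by positivity)
      ((measurable_of_countable _).aestronglyMeasurable)]
    simp only [ENNReal.ofReal_natCast]
    rw [hL1, hI1, ENNReal.toReal_ofReal]
    have h1 : (0:ℝ) < 1 := one_pos
    have : q/(1+ρ) ≤ q := by
      rw [div_le_iff₀ hρ1]
      nlinarith
    simp only [div_one, neg_div, zero_div]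
    linarith
  have hm2 : (∫ n : ℕ, (n : ℝ) ^ 2 ∂μ)
      = (4*q^2+2*q)/1 + (-(4*q^2+q))/(1+ρ) + q^2/(1+2*ρ) := by
    rw [integral_eq_lintegral_of_nonneg_ae (Filter.Eventually.of_forall fun n => by positivity)
      ((measurable_of_countable _).aestronglyMeasurable)]
    have hcast : ∀ n : ℕ, ENNReal.ofReal ((n:ℝ)^2) = (n : ℝ≥0∞)^2 := by
      intro n
      rw [ENNReal.ofReal_pow (by positivity), ENNReal.ofReal_natCast]
    simp only [hcast]
    rw [hL2, hI2, ENNReal.toReal_ofReal]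
    have h4 : (4*q^2+q)/(1+ρ) ≤ 4*q^2+q := by
      rw [div_le_iff₀ hρ1]
      nlinarith
    have h5 : 0 ≤ q^2/(1+2*ρ) := by positivity
    simp only [div_one, neg_div]
    linarith
  have hρ0 : ρ ≠ 0 := hρ.ne'
  have hρ1' : (1:ℝ) + ρ ≠ 0 := hρ1.ne'
  have hρ2' : (1:ℝ) + 2*ρ ≠ 0 := hρ2.ne'
  refine ⟨?_, ?_, ?_⟩
  · rw [hm1, hq]
    field_simp
    ring
  · rw [hm1, hq]
    field_simp
    ring
  · rw [hm1, hm2, hq]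
    field_simp
    ring
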